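/- Let l ≠ 3 be a positive integer and λ₁, λ₂ nonzero reals, S̄ constant. Then v: ℝ → (0,∞) satisfies v'' + ((l−3)/4)(v')²/v − (l/2)(λ₁+λ₂)v' + [(l+1)λ₁λ₂ − λ₁² − λ₂² + S̄/l]v = 0 if and only if w := v^{(l+1)/4} satisfies the linear ODE w'' − (l/2)(λ₁+λ₂)w' + ((l+1)/4)[(l+1)λ₁λ₂ − λ₁² − λ₂² + S̄/l]w = 0. -/

import Mathlib

open Real

/-- For `l ≠ 3` a positive integer, `λ₁, λ₂ ≠ 0`, `S̄` constant, a positive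
function `v` satisfies the nonlinear constant-scalar-curvature equation (36)
`v'' + ((l−3)/4)(v')²/v − (l/2)(λ₁+λ₂) v' + [(l+1)λ₁λ₂ − λ₁² − λ₂² + S̄/l] v = 0`
iff `w := v^{(l+1)/4}` satisfies the linear equation
`w'' − (l/2)(λ₁+λ₂) w' + ((l+1)/4)[(l+1)λ₁λ₂ − λ₁² − λ₂² + S̄/l] w = 0`. -/
theorem quarter_symmetric_scalar_ODE_substitution
    (l : ℕ) (hlpos : 0 < l) (hl3 : l ≠ 3)
    (l1 l2 Sb : ℝ) (hl1 : l1 ≠ 0) (hl2 : l2 ≠ 0)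
    (v : ℝ → ℝ) (hvpos : ∀ t, 0 < v t) (hv : ContDiff ℝ 2 v) :
    (∀ t, deriv (deriv v) t + (((l : ℝ) - 3) / 4) * (deriv v t) ^ 2 / v t
        - ((l : ℝ) / 2) * (l1 + l2) * deriv v t
        + (((l : ℝ) + 1) * l1 * l2 - l1 ^ 2 - l2 ^ 2 + Sb / (l : ℝ)) * v t = 0)
    ↔
    (∀ t, deriv (deriv (fun s => v s ^ (((l : ℝ) + 1) / 4))) t
        - ((l : ℝ) / 2) * (l1 + l2) * deriv (fun s => v s ^ (((l : ℝ) + 1) / 4)) t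
        + (((l : ℝ) + 1) / 4)
            * (((l : ℝ) + 1) * l1 * l2 - l1 ^ 2 - l2 ^ 2 + Sb / (l : ℝ))
            * v t ^ (((l : ℝ) + 1) / 4) = 0) := by
  set p : ℝ := ((l : ℝ) + 1) / 4 with hp
  have hppos : 0 < p := by positivity
  have hv1 : Differentiable ℝ v := hv.differentiable (by norm_num)
  have hv2 : Differentiable ℝ (deriv v) := by
    have h : ContDiff ℝ (1 + 1) v := by norm_num; exact hv
    rw [contDiff_succ_iff_deriv] at h
    exact h.2.2.differentiable (by norm_num)
  have hw' : ∀ t, HasDerivAt (fun s => v s ^ p) (p * v t ^ (p - 1) * deriv v t) t := by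
    intro t
    have h1 := Real.hasDerivAt_rpow_const (x := v t) (p := p) (Or.inl (hvpos t).ne')
    have h2 := h1.comp t (hv1 t).hasDerivAt
    simpa [Function.comp_def, mul_comm, mul_assoc] using h2
  have hd1 : deriv (fun s => v s ^ p) = fun t => p * v t ^ (p - 1) * deriv v t :=
    funext fun t => (hw' t).deriv
  have hw'' : ∀ t, deriv (deriv (fun s => v s ^ p)) t
      = p * ((p - 1) * v t ^ (p - 2) * deriv v t) * deriv v t
        + p * v t ^ (p - 1) * deriv (deriv v) t := by
    intro t
    rw [hd1]
    have h1 : HasDerivAt (fun s => v s ^ (p - 1)) ((p - 1) * v t ^ (p - 2) * deriv v t) t := by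
      have h := (Real.hasDerivAt_rpow_const (x := v t) (p := p - 1)
        (Or.inl (hvpos t).ne')).comp t (hv1 t).hasDerivAt
      have : p - 1 - 1 = p - 2 := by ring
      simpa [Function.comp_def, this, mul_comm, mul_assoc] using h
    have h2 : HasDerivAt (fun s => p * v s ^ (p - 1))
        (p * ((p - 1) * v t ^ (p - 2) * deriv v t)) t := h1.const_mul p
    have h3 := h2.mul ((hv2 t).hasDerivAt)
    exact h3.deriv
  set K : ℝ := ((l : ℝ) + 1) * l1 * l2 - l1 ^ 2 - l2 ^ 2 + Sb / (l : ℝ) with hK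
  set C : ℝ := ((l : ℝ) / 2) * (l1 + l2) with hC
  have key : ∀ t,
      deriv (deriv (fun s => v s ^ p)) t - C * deriv (fun s => v s ^ p) t + p * K * v t ^ p
      = p * v t ^ (p - 1)
        * (deriv (deriv v) t + (((l : ℝ) - 3) / 4) * (deriv v t) ^ 2 / v t
            - C * deriv v t + K * v t) := by
    intro t
    have ha : (0 : ℝ) < v t := hvpos t
    have e1 : v t ^ (p - 2) = v t ^ (p - 1) / v t := by
      rw [show p - 2 = (p - 1) - 1 by ring, Real.rpow_sub ha, Real.rpow_one]
    have e2 : v t ^ p = v t ^ (p - 1) * v t := by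
      have h := Real.rpow_add ha (p - 1) 1
      rw [sub_add_cancel, Real.rpow_one] at h
      exact h
    have e3 : ((l : ℝ) - 3) / 4 = p - 1 := by rw [hp]; ring
    rw [hw'' t, hd1, e1, e2, e3]
    field_simp
    ring
  constructor
  · intro h t
    have := key t
    rw [h t, mul_zero] at this
    linarith [this]
  · intro h t
    have h0 := key t
    rw [h t] at h0
    have hne : p * v t ^ (p - 1) ≠ 0 :=
      mul_ne_zero hppos.ne' (Real.rpow_pos_of_pos (hvpos t) _).ne'
    have := (mul_eq_zero.mp h0.symm).resolve_left hne
    linarith [this]
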